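/- There is a universal constant C such that for every τ > 0 and every C¹ function f on a neighborhood of Σ_τ in ℝ^{1+2} whose restriction to Σ_τ is compactly supported: ∫_{Σ_τ} (τ/t) f² dvol_{Σ_τ} ≤ C ∫_{Σ_τ} (1 + ρ²)(τ/t) ((L¹f)² + (L²f)²) dvol_{Σ_τ}, where ρ = arcosh(t/τ) at the integration point. -/

import Mathlib

/-!
Common definitions: spacetime `ℝ^{1+d}` is modeled as `ℝ × (Fin d → ℝ)` with first
coordinate the time `t`.
-/

noncomputable section

open Real MeasureTheory

/-- Spacetime `ℝ^{1+d}`. -/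
abbrev Spt (d : ℕ) := ℝ × (Fin d → ℝ)

/-- Time derivative `∂_t f`. -/
def ptD {d : ℕ} (f : Spt d → ℝ) : Spt d → ℝ := fun p => fderiv ℝ f p (1, 0)

/-- Spatial derivative `∂_{x^i} f`. -/
def pxD {d : ℕ} (i : Fin d) (f : Spt d → ℝ) : Spt d → ℝ :=
  fun p => fderiv ℝ f p (0, Pi.single i 1)

/-- Lorentz boost `L^i f = t ∂_{x^i} f + x^i ∂_t f`. -/
def LbD {d : ℕ} (i : Fin d) (f : Spt d → ℝ) : Spt d → ℝ :=
  fun p => p.1 * pxD i f p + p.2 i * ptD f p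

/-- Iterated Lorentz boosts `L^α f = L^{α_m} ⋯ L^{α_1} f` for a multi-index `α`. -/
def Lmulti {d : ℕ} : List (Fin d) → (Spt d → ℝ) → Spt d → ℝ
  | [], f => f
  | i :: l, f => LbD i (Lmulti l f)

/-- Wave operator `□f = -∂_t² f + Σ_i ∂_{x^i}² f`. -/
def BoxD {d : ℕ} (f : Spt d → ℝ) : Spt d → ℝ :=
  fun p => -(ptD (ptD f) p) + ∑ i, pxD i (pxD i f) p

/-- Minkowski pairing `η(df, dg) = -∂_t f ∂_t g + Σ_i ∂_{x^i} f ∂_{x^i} g`. -/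
def etaD {d : ℕ} (f g : Spt d → ℝ) : Spt d → ℝ :=
  fun p => -(ptD f p * ptD g p) + ∑ i, pxD i f p * pxD i g p

/-- Morawetz field `K f = (t² + |x|²) ∂_t f + 2t Σ_i x^i ∂_{x^i} f`. -/
def KvD {d : ℕ} (f : Spt d → ℝ) : Spt d → ℝ :=
  fun p => (p.1 ^ 2 + ∑ i, p.2 i ^ 2) * ptD f p + 2 * p.1 * ∑ i, p.2 i * pxD i f p

/-- Euclidean norm `|x|` of a spatial point. -/
def spnorm {d : ℕ} (x : Fin d → ℝ) : ℝ := Real.sqrt (∑ i, x i ^ 2)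

/-- Hyperboloidal time `τ = √(t² - |x|²)`. -/
def tau {d : ℕ} (p : Spt d) : ℝ := Real.sqrt (p.1 ^ 2 - ∑ i, p.2 i ^ 2)

/-- `sobd d = ⌊d/2⌋ + 1`. -/
def sobd (d : ℕ) : ℕ := d / 2 + 1

/-- The hyperboloid `Σ_τ = {t² - |x|² = τ², t > 0}`. -/
def SigmaSet (d : ℕ) (τ : ℝ) : Set (Spt d) := {p | p.1 ^ 2 - ∑ i, p.2 i ^ 2 = τ ^ 2 ∧ 0 < p.1}

/-- Integral over the hyperboloid `Σ_τ` with respect to the induced volume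
`τ^d sinh(ρ)^{d-1} dρ dθ`; in the graph parameterization `t = √(τ² + |x|²)` of `Σ_τ`
over `ℝ^d` this volume form is exactly `(τ/t) dx`. -/
def hbInt (d : ℕ) (τ : ℝ) (F : Spt d → ℝ) : ℝ :=
  ∫ x : Fin d → ℝ,
    F (Real.sqrt (τ ^ 2 + ∑ i, x i ^ 2), x) * (τ / Real.sqrt (τ ^ 2 + ∑ i, x i ^ 2))

/-- Spatial partial derivative of a function on `ℝ^d`. -/
def pd {d : ℕ} (i : Fin d) (g : (Fin d → ℝ) → ℝ) : (Fin d → ℝ) → ℝ :=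
  fun x => fderiv ℝ g x (Pi.single i 1)

/-- Iterated spatial partial derivatives `∂^β g`. -/
def pdMulti {d : ℕ} : List (Fin d) → ((Fin d → ℝ) → ℝ) → (Fin d → ℝ) → ℝ
  | [], g => g
  | i :: l, g => pd i (pdMulti l g)

/-- Sobolev norm `‖g‖_{H^k(ℝ^d)}`. -/
def sobNorm {d : ℕ} (k : ℕ) (g : (Fin d → ℝ) → ℝ) : ℝ :=
  Real.sqrt (∑ m ∈ Finset.range (k + 1), ∑ β : Fin m → Fin d,
    ∫ x : Fin d → ℝ, (pdMulti (List.ofFn β) g x) ^ 2)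

/-- Initial energy `ℰ₀[f]² = ∫_{ℝ^d} (∂_t f(0,x))² + |∇_x f(0,x)|² dx`. -/
def E0 {d : ℕ} (f : Spt d → ℝ) : ℝ :=
  Real.sqrt (∫ x : Fin d → ℝ, ((ptD f (0, x)) ^ 2 + ∑ i, (pxD i f (0, x)) ^ 2))

/-- `|Lf| = ((L¹f)² + (L²f)²)^{1/2}` in two spatial dimensions. -/
def normL (f : Spt 2 → ℝ) (p : Spt 2) : ℝ := Real.sqrt ((LbD 0 f p) ^ 2 + (LbD 1 f p) ^ 2)

/-- The `∂_t`-energy `ℰ_τ[f]` on the hyperboloid `Σ_τ` (note `cosh ρ = t/τ`). -/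
def Ee (τ : ℝ) (f : Spt 2 → ℝ) : ℝ :=
  Real.sqrt (hbInt 2 τ fun p =>
    (τ ^ 2 * (p.1 / τ))⁻¹ * ((LbD 0 f p) ^ 2 + (LbD 1 f p) ^ 2) +
      (p.1 / τ)⁻¹ * (ptD f p) ^ 2)

/-- The `K`-energy `ℱ_τ[f]` on the hyperboloid `Σ_τ`. -/
def Fe (τ : ℝ) (f : Spt 2 → ℝ) : ℝ :=
  Real.sqrt (hbInt 2 τ fun p =>
    (p.1 / τ)⁻¹ * ((LbD 0 f p) ^ 2 + (LbD 1 f p) ^ 2) +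
      (τ ^ 2 * (p.1 / τ))⁻¹ * (KvD f p + p.1 * f p) ^ 2)

/-- `L^∞` norm of `f` along the hyperboloid `Σ_τ`. -/
def sigSup (τ : ℝ) (f : Spt 2 → ℝ) : ℝ :=
  ⨆ x : Fin 2 → ℝ, |f (Real.sqrt (τ ^ 2 + ∑ i, x i ^ 2), x)|

/-- Inverse hyperbolic cosine. -/
def arcoshR (x : ℝ) : ℝ := Real.log (x + Real.sqrt (x ^ 2 - 1))

namespace HI2D
abbrev X2 := Fin 2 → ℝ

def qf (τ : ℝ) (x : X2) : ℝ := τ^2 + ∑ i, x i ^ 2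
def tf (τ : ℝ) (x : X2) : ℝ := Real.sqrt (qf τ x)
def Lf (τ : ℝ) (x : X2) : ℝ := Real.log (qf τ x / τ^2)
def mf (τ : ℝ) (x : X2) : ℝ := τ^2 * (Lf τ x + 1/2) / qf τ x
def Vf (τ : ℝ) (i : Fin 2) (x : X2) : ℝ := mf τ x * x i
def Df (τ : ℝ) (x : X2) : ℝ :=
  τ^2 * (2 * qf τ x - τ^2 + 2 * Lf τ x * τ^2) / (qf τ x)^2

variable {τ : ℝ} (hτ : 0 < τ)

section
include hτ

lemma sq_le_qf (x : X2) : τ^2 ≤ qf τ x := by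
  have : (0:ℝ) ≤ ∑ i, x i ^ 2 := Finset.sum_nonneg fun i _ => sq_nonneg _
  simp only [qf, le_add_iff_nonneg_right]
  exact this

lemma qf_pos (x : X2) : 0 < qf τ x := lt_of_lt_of_le (by positivity) (sq_le_qf hτ x)

lemma Lf_nonneg (x : X2) : 0 ≤ Lf τ x :=
  Real.log_nonneg ((one_le_div (by positivity)).2 (sq_le_qf hτ x))

lemma tf_pos (x : X2) : 0 < tf τ x := Real.sqrt_pos.2 (qf_pos hτ x)

lemma tf_sq (x : X2) : tf τ x ^ 2 = qf τ x := Real.sq_sqrt (qf_pos hτ x).le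

lemma tau_le_tf (x : X2) : τ ≤ tf τ x := by
  have := Real.sqrt_le_sqrt (sq_le_qf hτ x)
  rwa [Real.sqrt_sq hτ.le] at this

end

def dq (x : X2) : X2 →L[ℝ] ℝ :=
  ∑ j, (2 * x j) • (ContinuousLinearMap.proj j : X2 →L[ℝ] ℝ)

lemma dq_single (x : X2) (i : Fin 2) : dq x (Pi.single i 1) = 2 * x i := by
  simp only [dq, ContinuousLinearMap.sum_apply, ContinuousLinearMap.smul_apply,
    ContinuousLinearMap.proj_apply, Pi.single_apply, smul_eq_mul]
  fin_cases i <;> simp [Fin.sum_univ_two]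

lemma hasFDerivAt_qf (τ : ℝ) (x : X2) : HasFDerivAt (qf τ) (dq x) x := by
  have h : ∀ j : Fin 2, HasFDerivAt (fun y : X2 => y j ^ 2)
      ((2 * x j) • (ContinuousLinearMap.proj j : X2 →L[ℝ] ℝ)) x := by
    intro j
    have hp := (ContinuousLinearMap.proj j : X2 →L[ℝ] ℝ).hasFDerivAt (x := x)
    have e : (fun y : X2 => y j ^ 2) = fun y => (ContinuousLinearMap.proj j : X2 →L[ℝ] ℝ) y *
        (ContinuousLinearMap.proj j : X2 →L[ℝ] ℝ) y := by funext y; simp [sq]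
    rw [e, two_mul, add_smul]
    exact hp.mul hp
  have := HasFDerivAt.sum (fun j (_ : j ∈ Finset.univ) => h j)
  unfold qf
  simpa [dq, Fin.sum_univ_two] using this.const_add (τ^2)

include hτ

lemma hasFDerivAt_tf (x : X2) :
    HasFDerivAt (tf τ) ((1 / (2 * tf τ x)) • dq x) x := by
  have h := (Real.hasDerivAt_sqrt (qf_pos hτ x).ne').comp_hasFDerivAt x (hasFDerivAt_qf τ x)
  exact h

lemma hasFDerivAt_mf (x : X2) :
    HasFDerivAt (mf τ) ((τ^2 * (1/2 - Lf τ x) / (qf τ x)^2) • dq x) x := by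
  have hq := qf_pos hτ x
  have hτ2 : (0:ℝ) < τ^2 := by positivity
  have hlog : HasDerivAt (fun s : ℝ => Real.log (s/τ^2)) (1 / qf τ x) (qf τ x) := by
    have hu : HasDerivAt (fun s : ℝ => s / τ^2) (1/τ^2) (qf τ x) :=
      (hasDerivAt_id (qf τ x)).div_const (τ^2)
    have h0 : qf τ x / τ^2 ≠ 0 := by positivity
    have := (Real.hasDerivAt_log h0).comp (qf τ x) hu
    refine this.congr_deriv ?_
    field_simp
  have hN : HasDerivAt (fun s : ℝ => τ^2 * (Real.log (s/τ^2) + 1/2))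
      (τ^2 / qf τ x) (qf τ x) := by
    have := (hlog.add_const (1/2)).const_mul (τ^2)
    refine this.congr_deriv ?_; ring
  have h1 : HasDerivAt (fun s : ℝ => τ^2 * (Real.log (s/τ^2) + 1/2) / s)
      (τ^2 * (1/2 - Real.log (qf τ x / τ^2)) / (qf τ x)^2) (qf τ x) := by
    have := hN.div (hasDerivAt_id (qf τ x)) hq.ne'
    refine this.congr_deriv ?_
    simp only [id]
    field_simp
    ring
  have := h1.comp_hasFDerivAt x (hasFDerivAt_qf τ x)
  exact this


def cf (τ : ℝ) (x : X2) : ℝ := τ^2 * (1/2 - Lf τ x) / (qf τ x)^2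

lemma hasFDerivAt_Vf (i : Fin 2) (x : X2) :
    HasFDerivAt (Vf τ i)
      (mf τ x • (ContinuousLinearMap.proj i : X2 →L[ℝ] ℝ) + x i • (cf τ x • dq x)) x := by
  have hm := hasFDerivAt_mf hτ x
  have hp := (ContinuousLinearMap.proj i : X2 →L[ℝ] ℝ).hasFDerivAt (x := x)
  have := hm.mul hp
  exact this

lemma pd_Vf (i j : Fin 2) (x : X2) :
    fderiv ℝ (Vf τ i) x (Pi.single j 1)
      = x i * (cf τ x * (2 * x j)) + mf τ x * (Pi.single j 1 : X2) i := by
  rw [(hasFDerivAt_Vf hτ i x).fderiv]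
  simp [dq_single]
  ring

lemma div_Vf (x : X2) :
    ∑ i, fderiv ℝ (Vf τ i) x (Pi.single i 1) = Df τ x := by
  have hq := (qf_pos hτ x).ne'
  have hs : x 0 ^ 2 + x 1 ^ 2 = qf τ x - τ^2 := by
    simp [qf, Fin.sum_univ_two]
  rw [Fin.sum_univ_two, pd_Vf hτ 0 0, pd_Vf hτ 1 1]
  simp only [Pi.single_eq_same, cf, mf, Df, mul_one]
  field_simp
  linear_combination (2 - 4*Lf τ x) * hs

omit hτ in
lemma continuous_qf : Continuous (qf τ) := by
  unfold qf; fun_prop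

lemma continuous_Lf : Continuous (Lf τ) := by
  unfold Lf
  exact (continuous_qf.div_const _).log fun x => by
    have := qf_pos hτ x; positivity

lemma continuous_mf : Continuous (mf τ) := by
  unfold mf
  exact ((continuous_const.mul ((continuous_Lf hτ).add continuous_const)).div
    continuous_qf fun x => (qf_pos hτ x).ne')

lemma continuous_Vf (i : Fin 2) : Continuous (Vf τ i) :=
  (continuous_mf hτ).mul (continuous_apply i)

lemma continuous_Df : Continuous (Df τ) := by
  unfold Df
  exact (continuous_const.mul (((continuous_const.mul continuous_qf).sub
    continuous_const).add ((continuous_const.mul (continuous_Lf hτ)).mul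
    continuous_const))).div (continuous_qf.pow 2) fun x => by
      have := qf_pos hτ x; positivity

omit hτ in
lemma continuous_tf : Continuous (tf τ) := continuous_qf.sqrt


lemma continuous_rf : Continuous (fun x : X2 => arcoshR (tf τ x / τ)) := by
  unfold arcoshR
  apply Continuous.log
  · exact (continuous_tf.div_const τ).add
      (((continuous_tf.div_const τ).pow 2).sub continuous_const).sqrt
  · intro x
    have h1 : 1 ≤ tf τ x / τ := (one_le_div hτ).2 (tau_le_tf hτ x)
    have h2 : 0 ≤ Real.sqrt ((tf τ x / τ)^2 - 1) := Real.sqrt_nonneg _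
    positivity

lemma rf_nonneg (x : X2) : 0 ≤ arcoshR (tf τ x / τ) := by
  unfold arcoshR
  apply Real.log_nonneg
  have h1 : 1 ≤ tf τ x / τ := (one_le_div hτ).2 (tau_le_tf hτ x)
  have h2 : 0 ≤ Real.sqrt ((tf τ x / τ)^2 - 1) := Real.sqrt_nonneg _
  linarith

lemma Lf_le (x : X2) : Lf τ x ≤ 2 * arcoshR (tf τ x / τ) := by
  have h1 : 1 ≤ tf τ x / τ := (one_le_div hτ).2 (tau_le_tf hτ x)
  have h2 : 0 ≤ Real.sqrt ((tf τ x / τ)^2 - 1) := Real.sqrt_nonneg _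
  have hL : Lf τ x = 2 * Real.log (tf τ x / τ) := by
    unfold Lf
    rw [show qf τ x / τ^2 = (tf τ x / τ)^2 by
      rw [div_pow, tf_sq hτ x]]
    rw [Real.log_pow]
    push_cast; ring
  rw [hL]
  have : Real.log (tf τ x / τ) ≤ Real.log (tf τ x / τ + Real.sqrt ((tf τ x / τ)^2 - 1)) :=
    Real.log_le_log (by linarith) (by linarith)
  unfold arcoshR
  linarith

/-! ### The graph function `g = f ∘ φ` -/

def phi (τ : ℝ) (x : X2) : Spt 2 := (tf τ x, x)

lemma phi_mem (x : X2) : phi τ x ∈ SigmaSet 2 τ := by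
  refine ⟨?_, tf_pos hτ x⟩
  show tf τ x ^ 2 - ∑ i, x i ^ 2 = τ ^ 2
  rw [tf_sq hτ x]
  simp [qf]

omit hτ in
lemma continuous_phi : Continuous (phi τ) := continuous_tf.prodMk continuous_id

variable {f : Spt 2 → ℝ} {U : Set (Spt 2)}

omit hτ in
lemma fderiv_pair {p : Spt 2} (hdf : DifferentiableAt ℝ f p) (a : ℝ) (w : X2) :
    fderiv ℝ f p (a, w) = a * ptD f p + fderiv ℝ f p (0, w) := by
  have h : ((a, w) : Spt 2) = a • (((1:ℝ), (0:X2)) : Spt 2) + (((0:ℝ), w) : Spt 2) := by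
    simp [Prod.ext_iff]
  rw [h, map_add, ContinuousLinearMap.map_smul, smul_eq_mul]
  rfl

variable (hU : IsOpen U) (hsub : SigmaSet 2 τ ⊆ U) (hf : ContDiffOn ℝ 1 f U)
include hU hsub hf

lemma diffAt_f (x : X2) : DifferentiableAt ℝ f (phi τ x) :=
  (hf.contDiffAt (hU.mem_nhds (hsub (phi_mem hτ x)))).differentiableAt one_ne_zero

lemma hasFDerivAt_g (x : X2) :
    HasFDerivAt (fun y => f (phi τ y))
      ((fderiv ℝ f (phi τ x)).comp
        (((1 / (2 * tf τ x)) • dq x).prod (ContinuousLinearMap.id ℝ X2))) x := by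
  have hphi : HasFDerivAt (phi τ)
      (((1 / (2 * tf τ x)) • dq x).prod (ContinuousLinearMap.id ℝ X2)) x :=
    HasFDerivAt.prodMk (hasFDerivAt_tf hτ x) (hasFDerivAt_id x)
  exact ((diffAt_f hτ hU hsub hf x).hasFDerivAt).comp x hphi

lemma pd_g (i : Fin 2) (x : X2) :
    fderiv ℝ (fun y => f (phi τ y)) x (Pi.single i 1)
      = (x i / tf τ x) * ptD f (phi τ x) + pxD i f (phi τ x) := by
  rw [(hasFDerivAt_g hτ hU hsub hf x).fderiv]
  have ht := (tf_pos hτ x).ne'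
  have h1 : (((1 / (2 * tf τ x)) • dq x).prod
      (ContinuousLinearMap.id ℝ X2)) (Pi.single i 1)
      = ((x i / tf τ x : ℝ), (Pi.single i 1 : X2)) := by
    simp [ContinuousLinearMap.prod_apply, dq_single]
    field_simp
  rw [ContinuousLinearMap.comp_apply, h1,
    fderiv_pair (diffAt_f hτ hU hsub hf x)]
  rfl

lemma LbD_g (i : Fin 2) (x : X2) :
    LbD i f (phi τ x)
      = tf τ x * fderiv ℝ (fun y => f (phi τ y)) x (Pi.single i 1) := by
  rw [pd_g hτ hU hsub hf i x]
  have ht := (tf_pos hτ x).ne'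
  show tf τ x * pxD i f (phi τ x) + x i * ptD f (phi τ x) = _
  field_simp
  ring

lemma continuous_g : Continuous (fun x => f (phi τ x)) :=
  hf.continuousOn.comp_continuous continuous_phi fun x => hsub (phi_mem hτ x)

lemma continuous_pdg (i : Fin 2) :
    Continuous (fun x => fderiv ℝ (fun y => f (phi τ y)) x (Pi.single i 1)) := by
  have he : (fun x => fderiv ℝ (fun y => f (phi τ y)) x (Pi.single i 1))
      = fun x => (x i / tf τ x) * ptD f (phi τ x) + pxD i f (phi τ x) :=
    funext (pd_g hτ hU hsub hf i)
  rw [he]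
  have hdf_c : Continuous fun x => fderiv ℝ f (phi τ x) :=
    (hf.continuousOn_fderiv_of_isOpen hU le_rfl).comp_continuous continuous_phi
      fun x => hsub (phi_mem hτ x)
  have h1 : Continuous fun x => ptD f (phi τ x) := hdf_c.clm_apply continuous_const
  have h2 : Continuous fun x => pxD i f (phi τ x) := hdf_c.clm_apply continuous_const
  exact (((continuous_apply i).div continuous_tf
    fun x => (tf_pos hτ x).ne').mul h1).add h2

/-! ### Pointwise inequalities -/

omit hU hsub hf

lemma Df_pos (x : X2) : 0 < Df τ x := by
  have hq := qf_pos hτ x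
  have hL := Lf_nonneg hτ x
  have h1 : τ^2 ≤ qf τ x := sq_le_qf hτ x
  have hτ2 : (0:ℝ) < τ^2 := by positivity
  unfold Df
  apply div_pos _ (by positivity)
  nlinarith [mul_pos hτ2 hτ2, mul_nonneg hτ2.le (mul_nonneg hL hτ2.le),
    mul_le_mul_of_nonneg_left h1 hτ2.le]

lemma P1 (x : X2) : τ^2 / qf τ x ≤ Df τ x := by
  have hq := qf_pos hτ x
  have hL := Lf_nonneg hτ x
  have h1 : τ^2 ≤ qf τ x := sq_le_qf hτ x
  have hτ2 : (0:ℝ) < τ^2 := by positivity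
  unfold Df
  rw [div_le_div_iff₀ hq (by positivity)]
  have h5 : qf τ x ≤ 2*qf τ x - τ^2 + 2*Lf τ x*τ^2 := by nlinarith
  nlinarith [mul_le_mul_of_nonneg_left h5 (mul_nonneg hτ2.le hq.le)]

lemma P3core (a b x0 x1 q L ρ : ℝ) (hq : q = τ^2 + x0^2 + x1^2)
    (hL0 : 0 ≤ L) (hρ0 : 0 ≤ ρ) (hLρ : L ≤ 2*ρ) :
    (L + 1/2)^2 * (a*x0 + b*x1)^2
      ≤ 4 * (1 + ρ^2) * (a^2 + b^2) * (2*q - τ^2 + 2*L*τ^2) := by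
  have hτ2 : (0:ℝ) ≤ τ^2 := sq_nonneg τ
  have c1 : (a*x0 + b*x1)^2 ≤ (a^2 + b^2) * (x0^2 + x1^2) := by
    nlinarith [sq_nonneg (a*x1 - b*x0)]
  have c2 : (L + 1/2)^2 ≤ 8 * (1 + ρ^2) := by
    nlinarith [sq_nonneg (ρ - 1), sq_nonneg (2*ρ - L)]
  have c3 : (L + 1/2)^2 * (a*x0 + b*x1)^2
      ≤ (8 * (1 + ρ^2)) * ((a^2 + b^2) * (x0^2 + x1^2)) :=
    mul_le_mul c2 c1 (sq_nonneg _) (by positivity)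
  have c4 : (x0^2 + x1^2) * 2 ≤ 2*q - τ^2 + 2*L*τ^2 := by nlinarith
  nlinarith [mul_nonneg (mul_nonneg (by positivity : (0:ℝ) ≤ 4*(1+ρ^2))
    (by positivity : (0:ℝ) ≤ a^2+b^2))
    (by nlinarith : (0:ℝ) ≤ 2*q - τ^2 + 2*L*τ^2 - (x0^2+x1^2)*2)]

lemma P3 (x : X2) (a b : ℝ) :
    2 * (a * Vf τ 0 x + b * Vf τ 1 x)^2 / Df τ x
      ≤ 8 * (τ^2 * (1 + arcoshR (tf τ x / τ)^2) * (a^2 + b^2)) := by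
  have hq := qf_pos hτ x
  have hD := Df_pos hτ x
  have hL := Lf_nonneg hτ x
  have hρ0 := rf_nonneg hτ x
  have hLρ := Lf_le hτ x
  have hqe : qf τ x = τ^2 + x 0 ^2 + x 1 ^2 := by
    simp [qf, Fin.sum_univ_two]; ring
  rw [div_le_iff₀ hD]
  have hmq : mf τ x * qf τ x = τ^2 * (Lf τ x + 1/2) := by
    unfold mf; field_simp
  have key := P3core hτ a b (x 0) (x 1) (qf τ x) (Lf τ x)
    (arcoshR (tf τ x / τ)) hqe hL hρ0 hLρ
  have hDq : Df τ x * (qf τ x)^2 = τ^2*(2*qf τ x - τ^2 + 2*Lf τ x*τ^2) := by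
    unfold Df; field_simp
  rw [← mul_le_mul_iff_left₀ (show (0:ℝ) < (qf τ x)^2 by positivity)]
  calc 2*(a * Vf τ 0 x + b * Vf τ 1 x)^2*(qf τ x)^2
      = 2*τ^4*((Lf τ x + 1/2)^2*(a*x 0 + b*x 1)^2) := by
        show 2*(a*(mf τ x*x 0) + b*(mf τ x*x 1))^2*(qf τ x)^2 = _
        linear_combination
          (2*(a*x 0 + b*x 1)^2*(mf τ x*qf τ x + τ^2*(Lf τ x + 1/2)))*hmq
    _ ≤ 2*τ^4*(4*(1 + arcoshR (tf τ x / τ)^2)*(a^2 + b^2)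
          *(2*qf τ x - τ^2 + 2*Lf τ x*τ^2)) :=
        mul_le_mul_of_nonneg_left key (by positivity)
    _ = 8*(τ^2*(1 + arcoshR (tf τ x / τ)^2)*(a^2 + b^2))*Df τ x*(qf τ x)^2 := by
        linear_combination
          (-8*(τ^2*(1 + arcoshR (tf τ x / τ)^2)*(a^2 + b^2)))*hDq

lemma continuous_cf : Continuous (cf τ) := by
  unfold cf
  exact (continuous_const.mul (continuous_const.sub (continuous_Lf hτ))).div
    (continuous_qf.pow 2) fun x => by have := qf_pos hτ x; positivity

lemma continuous_pdV (i j : Fin 2) :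
    Continuous (fun x => fderiv ℝ (Vf τ i) x (Pi.single j 1)) := by
  have e : (fun x => fderiv ℝ (Vf τ i) x (Pi.single j 1))
      = fun x => x i * (cf τ x * (2 * x j)) + mf τ x * (Pi.single j 1 : X2) i :=
    funext (pd_Vf hτ i j)
  rw [e]
  exact ((continuous_apply i).mul ((continuous_cf hτ).mul
    (continuous_const.mul (continuous_apply j)))).add ((continuous_mf hτ).mul continuous_const)

lemma main_est (hU : IsOpen U) (hsub : SigmaSet 2 τ ⊆ U) (hf : ContDiffOn ℝ 1 f U)
    (hcs : HasCompactSupport (fun x : X2 => f (phi τ x))) :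
    ∫ x : X2, (τ^2 / qf τ x) * (f (phi τ x))^2
      ≤ 16 * ∫ x : X2, τ^2 * (1 + arcoshR (tf τ x / τ)^2) *
          ((fderiv ℝ (fun y => f (phi τ y)) x (Pi.single 0 1))^2 +
           (fderiv ℝ (fun y => f (phi τ y)) x (Pi.single 1 1))^2) := by
  set G : X2 → ℝ := fun x => f (phi τ x) with hG
  set gi : Fin 2 → X2 → ℝ := fun i x => fderiv ℝ G x (Pi.single i 1) with hgi
  set S : X2 → ℝ := fun x => gi 0 x * Vf τ 0 x + gi 1 x * Vf τ 1 x with hS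
  -- basic facts
  have hsupp : ∀ F : X2 → ℝ, (∀ x, x ∉ tsupport G → F x = 0) → HasCompactSupport F :=
    fun F hF => hcs.mono' (Function.support_subset_iff'.2 hF)
  have hGz : ∀ x, x ∉ tsupport G → G x = 0 := fun x hx =>
    image_eq_zero_of_notMem_tsupport hx
  have hgiz : ∀ (i : Fin 2) x, x ∉ tsupport G → gi i x = 0 := by
    intro i x hx
    have h0 : fderiv ℝ G x = 0 := by
      by_contra h
      exact hx (support_fderiv_subset ℝ (Function.mem_support.2 h))
    simp [hgi, h0]
  have hGc : Continuous G := continuous_g hτ hU hsub hf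
  have hgic : ∀ i, Continuous (gi i) := fun i => continuous_pdg hτ hU hsub hf i
  have hGd : Differentiable ℝ G := fun x => (hasFDerivAt_g hτ hU hsub hf x).differentiableAt
  have hG2d : Differentiable ℝ (fun y => G y ^ 2) := hGd.pow 2
  have hfd2 : ∀ (i : Fin 2) x, fderiv ℝ (fun y => G y ^ 2) x (Pi.single i 1)
      = 2 * G x * gi i x := by
    intro i x
    have h := ((hGd x).hasFDerivAt.mul (hGd x).hasFDerivAt)
    have h2 : HasFDerivAt (fun y => G y ^ 2) ((2 * G x) • fderiv ℝ G x) x := by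
      have e : (fun y => G y ^ 2) = fun y => G y * G y := by funext y; ring
      rw [e, two_mul, add_smul]
      exact h
    rw [h2.fderiv]
    simp [hgi]
  have hqc : Continuous (qf τ) := continuous_qf
  have hqne : ∀ x, qf τ x ≠ 0 := fun x => (qf_pos hτ x).ne'
  have hDne : ∀ x, Df τ x ≠ 0 := fun x => (Df_pos hτ x).ne'
  have hSc : Continuous S :=
    ((hgic 0).mul (continuous_Vf hτ 0)).add ((hgic 1).mul (continuous_Vf hτ 1))
  have hρc : Continuous (fun x => arcoshR (tf τ x / τ)) := continuous_rf hτ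
  -- integrability
  have IntA : Integrable (fun x => (τ^2 / qf τ x) * G x ^ 2) :=
    ((continuous_const.div hqc hqne).mul (hGc.pow 2)).integrable_of_hasCompactSupport
      (hsupp _ fun x hx => by simp [hGz x hx])
  have IntX : Integrable (fun x => G x ^ 2 * Df τ x) :=
    ((hGc.pow 2).mul (continuous_Df hτ)).integrable_of_hasCompactSupport
      (hsupp _ fun x hx => by simp [hGz x hx])
  have IntPd : ∀ i : Fin 2, Integrable
      (fun x => G x ^ 2 * fderiv ℝ (Vf τ i) x (Pi.single i 1)) := fun i =>
    ((hGc.pow 2).mul (continuous_pdV hτ i i)).integrable_of_hasCompactSupport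
      (hsupp _ fun x hx => by simp [hGz x hx])
  have IntGV : ∀ i : Fin 2, Integrable (fun x => G x ^ 2 * Vf τ i x) := fun i =>
    ((hGc.pow 2).mul (continuous_Vf hτ i)).integrable_of_hasCompactSupport
      (hsupp _ fun x hx => by simp [hGz x hx])
  have IntP : ∀ i : Fin 2, Integrable (fun x => 2 * G x * gi i x * Vf τ i x) := fun i =>
    (((continuous_const.mul hGc).mul (hgic i)).mul
      (continuous_Vf hτ i)).integrable_of_hasCompactSupport
      (hsupp _ fun x hx => by simp [hGz x hx])
  have IntDer : ∀ i : Fin 2, Integrable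
      (fun x => fderiv ℝ (fun y => G y ^ 2) x (Pi.single i 1) * Vf τ i x) := by
    intro i
    have e : (fun x => fderiv ℝ (fun y => G y ^ 2) x (Pi.single i 1) * Vf τ i x)
        = fun x => 2 * G x * gi i x * Vf τ i x := by
      funext x; rw [hfd2 i x]
    rw [e]
    exact IntP i
  have IntT : Integrable (fun x => 2 * S x ^ 2 / Df τ x) :=
    ((continuous_const.mul (hSc.pow 2)).div (continuous_Df hτ)
      hDne).integrable_of_hasCompactSupport
      (hsupp _ fun x hx => by simp [hS, hgiz 0 x hx, hgiz 1 x hx])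
  have IntR : Integrable (fun x => 8 * (τ^2 * (1 + arcoshR (tf τ x / τ)^2)
      * (gi 0 x ^ 2 + gi 1 x ^ 2))) :=
    (continuous_const.mul ((continuous_const.mul (continuous_const.add
      (hρc.pow 2))).mul (((hgic 0).pow 2).add
      ((hgic 1).pow 2)))).integrable_of_hasCompactSupport
      (hsupp _ fun x hx => by simp [hgiz 0 x hx, hgiz 1 x hx])
  -- Step 1 : LHS ≤ X
  have step1 : ∫ x : X2, (τ^2 / qf τ x) * G x ^ 2 ≤ ∫ x : X2, G x ^ 2 * Df τ x := by
    apply integral_mono IntA IntX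
    intro x
    have := P1 hτ x
    have h2 : (0:ℝ) ≤ G x ^ 2 := sq_nonneg _
    calc (τ^2 / qf τ x) * G x ^ 2 ≤ Df τ x * G x ^ 2 :=
          mul_le_mul_of_nonneg_right this h2
      _ = G x ^ 2 * Df τ x := by ring
  -- Step 2 : X = - ∫ 2 G S  (integration by parts)
  have ibp : ∀ i : Fin 2,
      ∫ x : X2, G x ^ 2 * fderiv ℝ (Vf τ i) x (Pi.single i 1)
        = - ∫ x : X2, fderiv ℝ (fun y => G y ^ 2) x (Pi.single i 1) * Vf τ i x :=
    fun i => integral_mul_fderiv_eq_neg_fderiv_mul_of_integrable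
      (IntDer i) (IntPd i) (IntGV i) (fun x _ => hG2d x)
      (fun x _ => (hasFDerivAt_Vf hτ i x).differentiableAt)
  have step2 : ∫ x : X2, G x ^ 2 * Df τ x
      = - ∫ x : X2, (2 * G x * gi 0 x * Vf τ 0 x + 2 * G x * gi 1 x * Vf τ 1 x) := by
    have e1 : (fun x : X2 => G x ^ 2 * Df τ x)
        = fun x => G x ^ 2 * fderiv ℝ (Vf τ 0) x (Pi.single 0 1)
            + G x ^ 2 * fderiv ℝ (Vf τ 1) x (Pi.single 1 1) := by
      funext x
      rw [← div_Vf hτ x, Fin.sum_univ_two]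
      ring
    rw [e1, integral_add (IntPd 0) (IntPd 1), ibp 0, ibp 1,
      integral_add (IntP 0) (IntP 1)]
    have e2 : ∀ i : Fin 2, ∫ x : X2, fderiv ℝ (fun y => G y ^ 2) x (Pi.single i 1) * Vf τ i x
        = ∫ x : X2, 2 * G x * gi i x * Vf τ i x := by
      intro i
      congr 1
      funext x
      rw [hfd2 i x]
    rw [e2 0, e2 1]
    ring
  -- Step 3 : - ∫ 2 G S ≤ ∫ (G² D / 2 + 2 S² / D)
  have step3 : - ∫ x : X2, (2 * G x * gi 0 x * Vf τ 0 x + 2 * G x * gi 1 x * Vf τ 1 x)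
      ≤ ∫ x : X2, (G x ^ 2 * Df τ x / 2 + 2 * S x ^ 2 / Df τ x) := by
    rw [← integral_neg]
    apply integral_mono ((IntP 0).add (IntP 1)).neg ((IntX.div_const 2).add IntT)
    intro x
    have hD := Df_pos hτ x
    have h := div_nonneg (sq_nonneg (Df τ x * G x + 2 * S x)) (by positivity : (0:ℝ) ≤ 2 * Df τ x)
    have e : (Df τ x * G x + 2 * S x)^2 / (2 * Df τ x)
        = G x ^ 2 * Df τ x / 2 + 2 * S x ^ 2 / Df τ x + 2 * G x * S x := by
      field_simp
      ring
    have hSx : S x = gi 0 x * Vf τ 0 x + gi 1 x * Vf τ 1 x := rfl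
    have h2 : 2 * G x * S x = 2 * G x * gi 0 x * Vf τ 0 x + 2 * G x * gi 1 x * Vf τ 1 x := by
      rw [hSx]; ring
    simp only [Pi.neg_apply, Pi.add_apply]
    linarith [h, e, h2]
  -- Step 4 : split the middle integral
  have step4 : ∫ x : X2, (G x ^ 2 * Df τ x / 2 + 2 * S x ^ 2 / Df τ x)
      = (∫ x : X2, G x ^ 2 * Df τ x) / 2 + ∫ x : X2, 2 * S x ^ 2 / Df τ x := by
    rw [integral_add (IntX.div_const 2) IntT, integral_div]
  -- Step 5 : weighted bound on the S term
  have step5 : ∫ x : X2, 2 * S x ^ 2 / Df τ x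
      ≤ ∫ x : X2, 8 * (τ^2 * (1 + arcoshR (tf τ x / τ)^2) * (gi 0 x ^ 2 + gi 1 x ^ 2)) := by
    apply integral_mono IntT IntR
    intro x
    exact P3 hτ x (gi 0 x) (gi 1 x)
  have step6 : ∫ x : X2, 8 * (τ^2 * (1 + arcoshR (tf τ x / τ)^2) * (gi 0 x ^ 2 + gi 1 x ^ 2))
      = 8 * ∫ x : X2, τ^2 * (1 + arcoshR (tf τ x / τ)^2) * (gi 0 x ^ 2 + gi 1 x ^ 2) :=
    integral_const_mul 8 _
  linarith [step1, step2, step3, step4, step5, step6]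

end HI2D

open HI2D in
/-- Logarithmically weighted Hardy inequality on hyperboloids, `d = 2`. -/
theorem hardy_inequality_2d :
    ∃ C > (0 : ℝ), ∀ τ : ℝ, 0 < τ → ∀ f : Spt 2 → ℝ,
      (∃ U : Set (Spt 2), IsOpen U ∧ SigmaSet 2 τ ⊆ U ∧ ContDiffOn ℝ 1 f U) →
      HasCompactSupport (fun x : Fin 2 → ℝ =>
        f (Real.sqrt (τ ^ 2 + ∑ i, x i ^ 2), x)) →
      hbInt 2 τ (fun p => τ / p.1 * f p ^ 2) ≤
        C * hbInt 2 τ fun p =>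
          (1 + arcoshR (p.1 / τ) ^ 2) * (τ / p.1) *
            ((LbD 0 f p) ^ 2 + (LbD 1 f p) ^ 2) := by
  refine ⟨16, by norm_num, ?_⟩
  rintro τ hτ f ⟨U, hU, hsub, hf⟩ hcs
  have hcs' : HasCompactSupport (fun x : HI2D.X2 => f (HI2D.phi τ x)) := hcs
  have hmain := HI2D.main_est hτ hU hsub hf hcs'
  have hLHS : hbInt 2 τ (fun p => τ / p.1 * f p ^ 2)
      = ∫ x : HI2D.X2, (τ^2 / HI2D.qf τ x) * (f (HI2D.phi τ x))^2 := by
    unfold hbInt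
    congr 1
    funext x
    have ht := HI2D.tf_pos hτ x
    have htq := HI2D.tf_sq hτ x
    show τ / HI2D.tf τ x * f (HI2D.phi τ x) ^ 2 * (τ / HI2D.tf τ x) = _
    have hq := HI2D.qf_pos hτ x
    field_simp
    linear_combination (-(f (HI2D.phi τ x)^2)) * htq
  have hRHS : hbInt 2 τ (fun p => (1 + arcoshR (p.1 / τ) ^ 2) * (τ / p.1) *
        ((LbD 0 f p) ^ 2 + (LbD 1 f p) ^ 2))
      = ∫ x : HI2D.X2, τ^2 * (1 + arcoshR (HI2D.tf τ x / τ)^2) *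
          ((fderiv ℝ (fun y => f (HI2D.phi τ y)) x (Pi.single 0 1))^2 +
           (fderiv ℝ (fun y => f (HI2D.phi τ y)) x (Pi.single 1 1))^2) := by
    unfold hbInt
    congr 1
    funext x
    have ht := HI2D.tf_pos hτ x
    have htq := HI2D.tf_sq hτ x
    have hL0 := HI2D.LbD_g hτ hU hsub hf 0 x
    have hL1 := HI2D.LbD_g hτ hU hsub hf 1 x
    show (1 + arcoshR (HI2D.tf τ x / τ) ^ 2) * (τ / HI2D.tf τ x) *
        ((LbD 0 f (HI2D.phi τ x)) ^ 2 + (LbD 1 f (HI2D.phi τ x)) ^ 2) *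
        (τ / HI2D.tf τ x) = _
    rw [hL0, hL1]
    set r := arcoshR (HI2D.tf τ x / τ)
    set A := fderiv ℝ (fun y => f (HI2D.phi τ y)) x (Pi.single 0 1)
    set B := fderiv ℝ (fun y => f (HI2D.phi τ y)) x (Pi.single 1 1)
    field_simp
  rw [hLHS, hRHS]
  exact hmain
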